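/- arXiv:2104.13127 — 2 statements merged into one kernel-verified Lean document; each statement's English description precedes it below -/
import Mathlib

section
/- Let X be a real normed space, C ⊂ X convex, E : ℝ^M → ℝ strictly convex, ν : X → ℝ^M linear, and R : X → ℝ convex. If f₁ and f₂ are both minimizers over C of f ↦ E(ν(f)) + R(f), then ν(f₁) = ν(f₂); if moreover R is strictly convex, then f₁ = f₂. -/
/-- two minimizers of a strictly convex data term plus convex
regularizer share the same measurements; if the regularizer is strictly convex
the minimizer is unique. -/
theorem stmt_12 {X : Type*} [NormedAddCommGroup X] [NormedSpace ℝ X] {M : ℕ}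
    (C : Set X) (hC : Convex ℝ C)
    (E : (Fin M → ℝ) → ℝ) (hE : StrictConvexOn ℝ Set.univ E)
    (ν : X →ₗ[ℝ] (Fin M → ℝ)) (R : X → ℝ) (hR : ConvexOn ℝ Set.univ R)
    (f₁ f₂ : X) (hf₁ : f₁ ∈ C) (hf₂ : f₂ ∈ C)
    (hmin₁ : ∀ f ∈ C, E (ν f₁) + R f₁ ≤ E (ν f) + R f)
    (hmin₂ : ∀ f ∈ C, E (ν f₂) + R f₂ ≤ E (ν f) + R f) :
    ν f₁ = ν f₂ ∧ (StrictConvexOn ℝ Set.univ R → f₁ = f₂) := by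
  have heq : E (ν f₁) + R f₁ = E (ν f₂) + R f₂ :=
    le_antisymm (hmin₁ f₂ hf₂) (hmin₂ f₁ hf₁)
  set g : X := (1/2 : ℝ) • f₁ + (1/2 : ℝ) • f₂ with hg
  have hgC : g ∈ C := hC hf₁ hf₂ (by norm_num) (by norm_num) (by norm_num)
  have hνg : ν g = (1/2 : ℝ) • ν f₁ + (1/2 : ℝ) • ν f₂ := by
    simp [hg, map_add, map_smul]
  have hRg : R g ≤ (1/2) * R f₁ + (1/2) * R f₂ :=
    hR.2 (Set.mem_univ f₁) (Set.mem_univ f₂) (by norm_num) (by norm_num) (by norm_num)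
  have hEg : E (ν g) ≤ (1/2) * E (ν f₁) + (1/2) * E (ν f₂) := by
    rw [hνg]
    exact hE.convexOn.2 (Set.mem_univ _) (Set.mem_univ _) (by norm_num) (by norm_num)
      (by norm_num)
  have hmin_g := hmin₁ g hgC
  constructor
  · by_contra hne
    have hEg' : E (ν g) < (1/2) * E (ν f₁) + (1/2) * E (ν f₂) := by
      rw [hνg]
      exact hE.2 (Set.mem_univ _) (Set.mem_univ _) hne (by norm_num) (by norm_num)
        (by norm_num)
    linarith
  · intro hRs
    by_contra hne
    have hRg' : R g < (1/2) * R f₁ + (1/2) * R f₂ :=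
      hRs.2 (Set.mem_univ _) (Set.mem_univ _) hne (by norm_num) (by norm_num) (by norm_num)
    linarith
end

section
/- Let H₁, …, H_N be reproducing-kernel Hilbert spaces of functions on ℝ^d with kernels r₁, …, r_N, and let λ₁, …, λ_N > 0. Then for data points (x_m, y_m) ∈ ℝ^d × ℝ, m = 1,…,M, any minimizer (f₁,…,f_N) ∈ H₁ × ⋯ × H_N of Σₘ (y_m − Σₙ fₙ(x_m))² + Σₙ λₙ ‖fₙ‖²_{Hₙ} satisfies fₙ ∈ span{rₙ(·, x_m) : m = 1,…,M} for each n; consequently the total solution f = Σₙ fₙ has the form f(x) = Σₘ aₘ r(x, x_m) with the multi-kernel r(x,y) = Σₙ (1/λₙ) rₙ(x,y) and a common coefficient vector a ∈ ℝ^M. -/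
/-- multi-kernel representer theorem: each component of a
minimizer of the multicomponent RKHS problem lies in the span of the kernel
sections at the data points, and the total solution is a linear combination of
the weighted multi-kernel sections with a common coefficient vector. -/
theorem stmt_19 {d N M : ℕ} (H : Fin N → Type*)
    [∀ n, NormedAddCommGroup (H n)] [∀ n, InnerProductSpace ℝ (H n)]
    [∀ n, CompleteSpace (H n)]
    (ι : ∀ n, H n →ₗ[ℝ] ((Fin d → ℝ) → ℝ))
    (r : ∀ n, (Fin d → ℝ) → H n)
    (hrepro : ∀ n (x : Fin d → ℝ) (g : H n), (inner ℝ (r n x) g : ℝ) = ι n g x)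
    (xs : Fin M → (Fin d → ℝ)) (y : Fin M → ℝ)
    (lam : Fin N → ℝ) (hlam : ∀ n, 0 < lam n)
    (f : ∀ n, H n)
    (hmin : ∀ g : ∀ n, H n,
      (∑ m, (y m - ∑ n, ι n (f n) (xs m)) ^ 2) + ∑ n, lam n * ‖f n‖ ^ 2 ≤
      (∑ m, (y m - ∑ n, ι n (g n) (xs m)) ^ 2) + ∑ n, lam n * ‖g n‖ ^ 2) :
    (∀ n, f n ∈ Submodule.span ℝ (Set.range (fun m : Fin M => r n (xs m)))) ∧
    ∃ a : Fin M → ℝ, ∀ x : Fin d → ℝ,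
      (∑ n, ι n (f n) x) = ∑ m, a m * ∑ n, (lam n)⁻¹ * ι n (r n (xs m)) x := by
  classical
  set e : Fin M → ℝ := fun m => y m - ∑ n, ι n (f n) (xs m) with he
  -- first-order optimality condition
  have hB : ∀ n (v : H n),
      lam n * (inner ℝ (f n) v : ℝ) - ∑ m, e m * ι n v (xs m) = 0 := by
    intro n v
    set B : ℝ := 2 * (lam n * (inner ℝ (f n) v : ℝ) - ∑ m, e m * ι n v (xs m))
      with hBdef
    set C : ℝ := (∑ m, (ι n v (xs m)) ^ 2) + lam n * ‖v‖ ^ 2 with hCdef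
    have hC : 0 ≤ C := by
      apply add_nonneg
      · exact Finset.sum_nonneg fun m _ => sq_nonneg _
      · exact mul_nonneg (hlam n).le (sq_nonneg _)
    have hQ : ∀ t : ℝ, 0 ≤ t * B + t ^ 2 * C := by
      intro t
      have hm := hmin (Function.update f n (f n + t • v))
      have hsum : ∀ m : Fin M,
          (∑ n', ι n' (Function.update f n (f n + t • v) n') (xs m))
            = (∑ n', ι n' (f n') (xs m)) + t * ι n v (xs m) := by
        intro m
        rw [← Finset.add_sum_erase _ _ (Finset.mem_univ n),
            ← Finset.add_sum_erase _ (fun n' => ι n' (f n') (xs m))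
              (Finset.mem_univ n)]
        have hrest : (∑ n' ∈ Finset.univ.erase n,
            ι n' (Function.update f n (f n + t • v) n') (xs m))
            = ∑ n' ∈ Finset.univ.erase n, ι n' (f n') (xs m) := by
          apply Finset.sum_congr rfl
          intro n' hn'
          rw [Function.update_of_ne (Finset.ne_of_mem_erase hn')]
        rw [hrest, Function.update_self, map_add, map_smul]
        simp [add_right_comm]
        ring
      have hnorm : (∑ n', lam n' * ‖Function.update f n (f n + t • v) n'‖ ^ 2)
          = (∑ n', lam n' * ‖f n'‖ ^ 2)
            + lam n * (2 * t * (inner ℝ (f n) v : ℝ) + t ^ 2 * ‖v‖ ^ 2) := by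
        rw [← Finset.add_sum_erase _ _ (Finset.mem_univ n),
            ← Finset.add_sum_erase _ (fun n' => lam n' * ‖f n'‖ ^ 2)
              (Finset.mem_univ n)]
        have hrest : (∑ n' ∈ Finset.univ.erase n,
            lam n' * ‖Function.update f n (f n + t • v) n'‖ ^ 2)
            = ∑ n' ∈ Finset.univ.erase n, lam n' * ‖f n'‖ ^ 2 := by
          apply Finset.sum_congr rfl
          intro n' hn'
          rw [Function.update_of_ne (Finset.ne_of_mem_erase hn')]
        rw [hrest, Function.update_self]
        have hexp : ‖f n + t • v‖ ^ 2
            = ‖f n‖ ^ 2 + 2 * t * (inner ℝ (f n) v : ℝ) + t ^ 2 * ‖v‖ ^ 2 := by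
          rw [norm_add_sq_real, real_inner_smul_right, norm_smul]
          simp [mul_pow]
          ring
        rw [hexp]
        ring
      have hfit : (∑ m, (y m - ∑ n', ι n'
            (Function.update f n (f n + t • v) n') (xs m)) ^ 2)
          = (∑ m, (y m - ∑ n', ι n' (f n') (xs m)) ^ 2)
            - 2 * t * (∑ m, e m * ι n v (xs m))
            + t ^ 2 * (∑ m, (ι n v (xs m)) ^ 2) := by
        rw [Finset.mul_sum, Finset.mul_sum, ← Finset.sum_sub_distrib,
            ← Finset.sum_add_distrib]
        apply Finset.sum_congr rfl
        intro m _
        rw [hsum m, he]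
        ring
      rw [hfit, hnorm] at hm
      rw [hBdef, hCdef]
      nlinarith [hm]
    -- conclude B = 0
    have hB0 : B = 0 := by
      have h1 : (0 : ℝ) < C + 1 := by linarith
      have h2 := hQ (-B / (C + 1))
      have h3 : -B / (C + 1) * B + (-B / (C + 1)) ^ 2 * C
          = -(B ^ 2) / (C + 1) ^ 2 := by
        field_simp
        ring
      rw [h3] at h2
      have h5 : (0 : ℝ) < (C + 1) ^ 2 := by positivity
      have h6 : (0 : ℝ) * (C + 1) ^ 2 ≤ -B ^ 2 := (le_div_iff₀ h5).mp h2
      have h7 : B ^ 2 = 0 := le_antisymm (by linarith) (sq_nonneg B)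
      exact pow_eq_zero_iff (by norm_num) |>.mp h7
    rw [hBdef] at hB0
    linarith
  -- derive the explicit form of f n
  have hform : ∀ n, f n = (lam n)⁻¹ • ∑ m, e m • r n (xs m) := by
    intro n
    have hz : lam n • f n - (∑ m, e m • r n (xs m)) = 0 := by
      rw [← inner_self_eq_zero (𝕜 := ℝ)]
      set w := lam n • f n - (∑ m, e m • r n (xs m)) with hw
      have : (inner ℝ (lam n • f n - (∑ m, e m • r n (xs m))) w : ℝ) = 0 := by
        rw [inner_sub_left, real_inner_smul_left, sum_inner]
        have hs : (∑ m, (inner ℝ (e m • r n (xs m)) w : ℝ))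
            = ∑ m, e m * ι n w (xs m) := by
          apply Finset.sum_congr rfl
          intro m _
          rw [real_inner_smul_left, hrepro]
        rw [hs]
        linarith [hB n w]
      exact this
    have hlamne : lam n ≠ 0 := (hlam n).ne'
    have : lam n • f n = ∑ m, e m • r n (xs m) := by
      rw [sub_eq_zero] at hz; exact hz
    rw [← this, smul_smul, inv_mul_cancel₀ hlamne, one_smul]
  constructor
  · intro n
    rw [hform n]
    refine Submodule.smul_mem _ _ (Submodule.sum_mem _ fun m _ => ?_)
    exact Submodule.smul_mem _ _ (Submodule.subset_span ⟨m, rfl⟩)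
  · refine ⟨e, fun x => ?_⟩
    have hι : ∀ n, ι n (f n) x
        = (lam n)⁻¹ * ∑ m, e m * ι n (r n (xs m)) x := by
      intro n
      rw [hform n, map_smul, map_sum]
      simp [Finset.sum_apply]
    calc (∑ n, ι n (f n) x)
        = ∑ n, (lam n)⁻¹ * ∑ m, e m * ι n (r n (xs m)) x := by
          exact Finset.sum_congr rfl fun n _ => hι n
      _ = ∑ n, ∑ m, e m * ((lam n)⁻¹ * ι n (r n (xs m)) x) := by
          refine Finset.sum_congr rfl fun n _ => ?_
          rw [Finset.mul_sum]
          exact Finset.sum_congr rfl fun m _ => by ring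
      _ = ∑ m, ∑ n, e m * ((lam n)⁻¹ * ι n (r n (xs m)) x) := Finset.sum_comm
      _ = ∑ m, e m * ∑ n, (lam n)⁻¹ * ι n (r n (xs m)) x := by
          exact Finset.sum_congr rfl fun m _ => (Finset.mul_sum _ _ _).symm
end
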